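/- arXiv:2312.12585 — 4 statements merged into one kernel-verified Lean document; each statement's English description precedes it below -/
import Mathlib

section
/- The joint state–action poisoning map (s, a) ↦ (F_S(s), F_A(s)(a)) is injective on S × A: for all s₁, s₂ ∈ S and all actions a₁, a₂ ∈ A, if F_S(s₁) = F_S(s₂) and F_A(s₁)(a₁) = F_A(s₂)(a₂), then s₁ = s₂ and a₁ = a₂. -/
open scoped Classical

/-- The state poisoning map: add the trigger `δ` on targeted states, identity elsewhere. -/
noncomputable def poisonState {G : Type*} [AddGroup G] (Sdag : Set G) (δ : G) (s : G) : G :=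
  if s ∈ Sdag then s + δ else s

/-- The action swap map: on targeted states it transposes the target action `a†` with the
designated optimal action `a*(s)`; elsewhere it is the identity. -/
noncomputable def swapAction {G A : Type*} (Sdag : Set G) (adag : A) (astar : G → A)
    (s : G) (a : A) : A :=
  if s ∈ Sdag then
    (if a = adag then astar s else if a = astar s then adag else a)
  else a

/-- The joint state–action poisoning map `(s, a) ↦ (F_S s, F_A s a)` is injective on `S × A`. -/
theorem poison_joint_injOn {G A : Type*} [AddGroup G] (S Sdag : Set G) (δ : G)
    (adag : A) (astar : G → A)
    (hsub : Sdag ⊆ S) (htrig : ∀ s ∈ Sdag, s + δ ∉ S) :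
    ∀ s₁ ∈ S, ∀ s₂ ∈ S, ∀ a₁ a₂ : A,
      poisonState Sdag δ s₁ = poisonState Sdag δ s₂ →
      swapAction Sdag adag astar s₁ a₁ = swapAction Sdag adag astar s₂ a₂ →
      s₁ = s₂ ∧ a₁ = a₂ := by
  intro s₁ hs₁ s₂ hs₂ a₁ a₂ hstate hact
  unfold poisonState at hstate
  by_cases h1 : s₁ ∈ Sdag <;> by_cases h2 : s₂ ∈ Sdag <;>
    simp only [h1, h2, if_pos, if_neg, if_true, if_false] at hstate
  · have hs : s₁ = s₂ := by exact add_right_cancel hstate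
    subst hs
    refine ⟨rfl, ?_⟩
    unfold swapAction at hact
    simp only [h1, if_true] at hact
    by_cases e1 : a₁ = adag <;> by_cases e2 : a₂ = adag <;>
      by_cases f1 : a₁ = astar s₁ <;> by_cases f2 : a₂ = astar s₁ <;>
      simp_all
  · exact absurd (hstate ▸ hs₂) (htrig s₁ h1)
  · exact absurd (hstate ▸ hs₁) (htrig s₂ h2)
  · subst hstate
    refine ⟨rfl, ?_⟩
    unfold swapAction at hact
    simpa [h1] using hact
end

section
/- Assume that for every targeted state s ∈ S† the optimal action set is the singleton π*(s) = {a*(s)}. Then the transferred policy π̃ selects exactly the target action on every poisoned targeted state: for every s ∈ (F_S '' S) \ S, π̃(s) = {a†}. -/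
open scoped Classical

/-- The inverse state map: identity on clean states, subtract the trigger `δ` elsewhere. -/
noncomputable def unpoisonState {G : Type*} [AddGroup G] (S : Set G) (δ : G) (s : G) : G :=
  if s ∈ S then s else s - δ

/-- The transferred policy `π̃ s = { F_A (F_S⁻ s) a : a ∈ π* (F_S⁻ s) }`. -/
noncomputable def transferredPolicy {G A : Type*} [AddGroup G] (S Sdag : Set G) (δ : G)
    (adag : A) (astar : G → A) (piStar : G → Set A) (s : G) : Set A :=
  swapAction Sdag adag astar (unpoisonState S δ s) '' piStar (unpoisonState S δ s)

/-- If the optimal action set on every targeted state is the singleton {a*(s)}, then the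
transferred policy selects exactly the target action on every poisoned targeted state. -/
theorem transferredPolicy_eq_target {G A : Type*} [AddGroup G] (S Sdag : Set G) (δ : G)
    (adag : A) (astar : G → A) (piStar : G → Set A)
    (hsub : Sdag ⊆ S) (htrig : ∀ s ∈ Sdag, s + δ ∉ S)
    (hsingle : ∀ s ∈ Sdag, piStar s = {astar s}) :
    ∀ s ∈ (poisonState Sdag δ '' S) \ S,
      transferredPolicy S Sdag δ adag astar piStar s = {adag} := by
  rintro s ⟨⟨t, htS, rfl⟩, hsnot⟩
  by_cases ht : t ∈ Sdag
  · have hps : poisonState Sdag δ t = t + δ := if_pos ht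
    have hun : unpoisonState S δ (poisonState Sdag δ t) = t := by
      rw [hps, unpoisonState, if_neg (htrig t ht)]; exact add_sub_cancel_right t δ
    simp only [transferredPolicy, hun, hsingle t ht, Set.image_singleton]
    congr 1
    simp only [swapAction, if_pos ht]
    by_cases h : astar t = adag <;> simp [h]
  · exfalso; exact hsnot (by rwa [poisonState, if_neg ht])
end

section
/- On clean states the transferred policy coincides with the original optimal policy: for every s ∈ (F_S '' S) ∩ S, π̃(s) = π*(s). -/
open scoped Classical

/-- On clean states the transferred policy coincides with the original optimal policy. -/
theorem transferredPolicy_eq_on_clean {G A : Type*} [AddGroup G] (S Sdag : Set G) (δ : G)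
    (adag : A) (astar : G → A) (piStar : G → Set A)
    (hsub : Sdag ⊆ S) (htrig : ∀ s ∈ Sdag, s + δ ∉ S) :
    ∀ s ∈ (poisonState Sdag δ '' S) ∩ S,
      transferredPolicy S Sdag δ adag astar piStar s = piStar s := by
  rintro s ⟨⟨t, ht, hpt⟩, hsS⟩
  have hsn : s ∉ Sdag := by
    intro hs
    by_cases htd : t ∈ Sdag
    · have : t + δ ∉ S := htrig t htd
      simp [poisonState, htd] at hpt
      exact this (hpt ▸ hsS)
    · simp [poisonState, htd] at hpt
      exact htd (hpt ▸ hs)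
  have hu : unpoisonState S δ s = s := by simp [unpoisonState, hsS]
  have hid : swapAction Sdag adag astar s = id := funext fun a => by simp [swapAction, hsn]
  simp [transferredPolicy, hu, swapAction, hsn, hid]
end

section
/- Without the uniqueness assumption on optimal actions, the following weaker feasibility guarantee holds: if a*(s) ∈ π*(s) for every targeted state s ∈ S†, then the target action is contained in the transferred policy on every poisoned targeted state, i.e. a† ∈ π̃(s) for every s ∈ (F_S '' S) \ S. -/
open scoped Classical

/-- Weaker feasibility guarantee: if `a*(s) ∈ π*(s)` for every targeted state, then the
target action is contained in the transferred policy on every poisoned targeted state. -/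
theorem target_mem_transferredPolicy {G A : Type*} [AddGroup G] (S Sdag : Set G) (δ : G)
    (adag : A) (astar : G → A) (piStar : G → Set A)
    (hsub : Sdag ⊆ S) (htrig : ∀ s ∈ Sdag, s + δ ∉ S)
    (hopt : ∀ s ∈ Sdag, astar s ∈ piStar s) :
    ∀ s ∈ (poisonState Sdag δ '' S) \ S,
      adag ∈ transferredPolicy S Sdag δ adag astar piStar s := by
  rintro s ⟨⟨t, htS, ht⟩, hsS⟩
  by_cases htd : t ∈ Sdag
  · have hs : s = t + δ := by simp [poisonState, htd] at ht; exact ht.symm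
    subst hs
    have hun : unpoisonState S δ (t + δ) = t := by
      simp [unpoisonState, htrig t htd]
    refine ⟨astar t, by rw [hun]; exact hopt t htd, ?_⟩
    rw [hun]
    by_cases h : astar t = adag <;> simp [swapAction, htd, h]
  · exfalso
    have : s = t := by simpa [poisonState, htd] using ht.symm
    exact hsS (this ▸ htS)
end
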